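/- For γ ∈ (0,1) and absolutely continuous f, g on [0,T] with f ∈ 𝕃_γ and g ∈ ℝ_γ, the fractional integration-by-parts formula holds: ∫_0^T d_t^γ f(t) · g(t) dt = ∫_0^T f(t) · d_{T−t}^γ g(t) dt + g(T)(I_t^{1−γ} f)(T) − f(0)(I_{T−t}^{1−γ} g)(0). -/

import Mathlib

open MeasureTheory intervalIntegral

/-- The left Caputo fractional derivative of order `γ`. -/
noncomputable def leftCaputo (γ : ℝ) (f : ℝ → ℝ) (t : ℝ) : ℝ :=
  (1 / Real.Gamma (1 - γ)) * ∫ r in (0:ℝ)..t, deriv f r / (t - r) ^ γ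

/-- The right Caputo fractional derivative of order `γ` on `[0,T]`. -/
noncomputable def rightCaputo (γ T : ℝ) (g : ℝ → ℝ) (t : ℝ) : ℝ :=
  (-1 / Real.Gamma (1 - γ)) * ∫ r in t..T, deriv g r / (r - t) ^ γ

/-- The left Riemann–Liouville fractional integral of order `1-γ`. -/
noncomputable def leftRL (γ : ℝ) (w : ℝ → ℝ) (t : ℝ) : ℝ :=
  (1 / Real.Gamma (1 - γ)) * ∫ r in (0:ℝ)..t, w r / (t - r) ^ γ

/-- The right Riemann–Liouville fractional integral of order `1-γ` on `[0,T]`. -/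
noncomputable def rightRL (γ T : ℝ) (w : ℝ → ℝ) (t : ℝ) : ℝ :=
  (1 / Real.Gamma (1 - γ)) * ∫ r in t..T, w r / (r - t) ^ γ

section FIBPHelpers

open Set

lemma fibp_inner1L {T : ℝ} (H : ℝ → ℝ → ℝ) {s : ℝ} (hs : s ∈ Set.Ioc (0:ℝ) T) :
    (∫ r in Set.Ioc (0:ℝ) T, (if r < s then H s r else 0)) = ∫ r in Set.Ioc (0:ℝ) s, H s r := by
  have h1 : ∀ r, (if r < s then H s r else 0) = (Set.Iio s).indicator (H s) r := by
    intro r; simp [Set.indicator_apply]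
  simp only [h1]
  rw [MeasureTheory.integral_indicator measurableSet_Iio,
    MeasureTheory.Measure.restrict_restrict measurableSet_Iio]
  have hset : Set.Iio s ∩ Set.Ioc 0 T = Set.Ioo 0 s := by
    ext r; simp only [Set.mem_inter_iff, Set.mem_Iio, Set.mem_Ioc, Set.mem_Ioo]
    exact ⟨fun h => ⟨h.2.1, h.1⟩, fun h => ⟨h.2, h.1, le_trans h.2.le hs.2⟩⟩
  rw [hset, ← MeasureTheory.integral_Ioc_eq_integral_Ioo]

lemma fibp_inner1R {T : ℝ} (H : ℝ → ℝ → ℝ) {r : ℝ} (hr : r ∈ Set.Ioc (0:ℝ) T) :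
    (∫ s in Set.Ioc (0:ℝ) T, (if r < s then H s r else 0)) = ∫ s in Set.Ioc r T, H s r := by
  have h1 : ∀ s, (if r < s then H s r else 0) = (Set.Ioi r).indicator (fun s => H s r) s := by
    intro s; simp [Set.indicator_apply]
  simp only [h1]
  rw [MeasureTheory.integral_indicator measurableSet_Ioi,
    MeasureTheory.Measure.restrict_restrict measurableSet_Ioi]
  have hset : Set.Ioi r ∩ Set.Ioc 0 T = Set.Ioc r T := by
    ext s; simp only [Set.mem_inter_iff, Set.mem_Ioi, Set.mem_Ioc]
    exact ⟨fun h => ⟨h.1, h.2.2⟩, fun h => ⟨h.1, lt_trans hr.1 h.1, h.2⟩⟩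
  rw [hset]

lemma fibp_inner2 {T : ℝ} (K : ℝ → ℝ → ℝ) {r : ℝ} (hr : r ∈ Set.Ioc (0:ℝ) T) :
    (∫ u in Set.Ioc (0:ℝ) T, (if r + u ≤ T then K r u else 0)) =
      ∫ u in Set.Ioc (0:ℝ) (T - r), K r u := by
  have h1 : ∀ u, (if r + u ≤ T then K r u else 0) = (Set.Iic (T - r)).indicator (K r) u := by
    intro u; simp only [Set.indicator_apply, Set.mem_Iic]
    congr 1; simp only [eq_iff_iff]; constructor <;> intro h <;> linarith
  simp only [h1]
  rw [MeasureTheory.integral_indicator measurableSet_Iic,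
    MeasureTheory.Measure.restrict_restrict measurableSet_Iic]
  have hset : Set.Iic (T - r) ∩ Set.Ioc 0 T = Set.Ioc 0 (T - r) := by
    ext u; simp only [Set.mem_inter_iff, Set.mem_Iic, Set.mem_Ioc]
    constructor
    · rintro ⟨h1', h2, _⟩; exact ⟨h2, h1'⟩
    · rintro ⟨h1', h2⟩; exact ⟨h2, h1', by linarith [hr.1]⟩
  rw [hset]

lemma swap_tri {T : ℝ} (H : ℝ → ℝ → ℝ)
    (hi : Integrable (fun p : ℝ × ℝ => if p.2 < p.1 then H p.1 p.2 else 0)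
      ((volume.restrict (Set.Ioc (0:ℝ) T)).prod (volume.restrict (Set.Ioc (0:ℝ) T)))) :
    ∫ s in Set.Ioc (0:ℝ) T, ∫ r in Set.Ioc (0:ℝ) s, H s r =
      ∫ r in Set.Ioc (0:ℝ) T, ∫ s in Set.Ioc r T, H s r := by
  have key := MeasureTheory.integral_integral_swap
    (f := fun s r => if r < s then H s r else 0) hi
  have hL : ∫ s in Set.Ioc (0:ℝ) T, ∫ r in Set.Ioc (0:ℝ) T, (if r < s then H s r else 0) =
      ∫ s in Set.Ioc (0:ℝ) T, ∫ r in Set.Ioc (0:ℝ) s, H s r :=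
    setIntegral_congr_fun measurableSet_Ioc (fun s hs => fibp_inner1L H hs)
  have hR : ∫ r in Set.Ioc (0:ℝ) T, ∫ s in Set.Ioc (0:ℝ) T, (if r < s then H s r else 0) =
      ∫ r in Set.Ioc (0:ℝ) T, ∫ s in Set.Ioc r T, H s r :=
    setIntegral_congr_fun measurableSet_Ioc (fun r hr => fibp_inner1R H hr)
  rw [← hL, ← hR]; exact key

lemma swap_tri2 {T : ℝ} (H : ℝ → ℝ → ℝ)
    (hi : Integrable (fun p : ℝ × ℝ => if p.1 + p.2 ≤ T then H p.1 p.2 else 0)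
      ((volume.restrict (Set.Ioc (0:ℝ) T)).prod (volume.restrict (Set.Ioc (0:ℝ) T)))) :
    ∫ r in Set.Ioc (0:ℝ) T, ∫ u in Set.Ioc (0:ℝ) (T - r), H r u =
      ∫ u in Set.Ioc (0:ℝ) T, ∫ r in Set.Ioc (0:ℝ) (T - u), H r u := by
  have key := MeasureTheory.integral_integral_swap
    (f := fun r u => if r + u ≤ T then H r u else 0) hi
  calc ∫ r in Set.Ioc (0:ℝ) T, ∫ u in Set.Ioc (0:ℝ) (T - r), H r u
      = ∫ r in Set.Ioc (0:ℝ) T, ∫ u in Set.Ioc (0:ℝ) T, (if r + u ≤ T then H r u else 0) :=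
        (setIntegral_congr_fun measurableSet_Ioc (fun r hr => fibp_inner2 H hr)).symm
    _ = ∫ u in Set.Ioc (0:ℝ) T, ∫ r in Set.Ioc (0:ℝ) T, (if r + u ≤ T then H r u else 0) := key
    _ = ∫ u in Set.Ioc (0:ℝ) T, ∫ r in Set.Ioc (0:ℝ) (T - u), H r u := by
        refine setIntegral_congr_fun measurableSet_Ioc (fun u hu => ?_)
        have h := fibp_inner2 (fun u r => H r u) hu
        rw [← h]
        refine setIntegral_congr_fun measurableSet_Ioc (fun r _ => ?_)
        rw [add_comm r u]

lemma ker_intble {γ : ℝ} (hγ1 : γ < 1) (x c d : ℝ) :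
    IntervalIntegrable (fun y => (y - x) ^ (-γ)) volume c d := by
  have h := (intervalIntegrable_rpow' (a := c - x) (b := d - x) (r := -γ)
    (by linarith)).comp_add_right (-x)
  simpa [sub_eq_add_neg] using h

lemma ker_intble' {γ : ℝ} (hγ1 : γ < 1) (x c d : ℝ) :
    IntervalIntegrable (fun y => (x - y) ^ (-γ)) volume c d := by
  have h := (intervalIntegrable_rpow' (a := x - c) (b := x - d) (r := -γ)
    (by linarith : (-1:ℝ) < -γ)).comp_sub_left x
  simpa using h

lemma kval {γ : ℝ} (hγ1 : γ < 1) {b : ℝ} (hb : 0 ≤ b) :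
    ∫ y in (0:ℝ)..b, y ^ (-γ) = b ^ (1 - γ) / (1 - γ) := by
  rw [integral_rpow (Or.inl (by linarith))]
  rw [Real.zero_rpow (by intro h; linarith [h] : -γ + 1 ≠ 0)]
  have : -γ + 1 = 1 - γ := by ring
  rw [this]; ring

lemma master {T : ℝ} (a : ℝ → ℝ) (w : ℝ → ℝ → ℝ) (C : ℝ)
    (ham : Measurable a) (hai : IntegrableOn a (Set.Ioc 0 T) volume)
    (hwm : Measurable (fun p : ℝ × ℝ => w p.1 p.2))
    (hwi : ∀ x ∈ Set.Ioc (0:ℝ) T, IntegrableOn (w x) (Set.Ioc 0 T) volume)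
    (hwb : ∀ x ∈ Set.Ioc (0:ℝ) T, (∫ y in Set.Ioc (0:ℝ) T, |w x y|) ≤ C) :
    Integrable (fun p : ℝ × ℝ => a p.1 * w p.1 p.2)
      ((volume.restrict (Set.Ioc (0:ℝ) T)).prod (volume.restrict (Set.Ioc (0:ℝ) T))) := by
  set μ := volume.restrict (Set.Ioc (0:ℝ) T) with hμ
  have hFm : AEStronglyMeasurable (fun p : ℝ × ℝ => a p.1 * w p.1 p.2) (μ.prod μ) :=
    ((ham.comp measurable_fst).mul hwm).aestronglyMeasurable
  rw [MeasureTheory.integrable_prod_iff hFm]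
  constructor
  · filter_upwards [ae_restrict_mem measurableSet_Ioc] with x hx
    exact (hwi x hx).const_mul _
  · apply MeasureTheory.Integrable.mono' (g := fun x => |a x| * C)
    · exact hai.abs.mul_const C
    · exact hFm.norm.integral_prod_right'
    · filter_upwards [ae_restrict_mem measurableSet_Ioc] with x hx
      have h1 : (∫ y, ‖a x * w x y‖ ∂μ) = |a x| * ∫ y, |w x y| ∂μ := by
        simp only [norm_mul, Real.norm_eq_abs]
        exact MeasureTheory.integral_const_mul _ _
      rw [Real.norm_eq_abs, h1, abs_of_nonneg (by positivity : (0:ℝ) ≤ |a x| * ∫ y, |w x y| ∂μ)]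
      exact mul_le_mul_of_nonneg_left (hwb x hx) (abs_nonneg _)

lemma sec {γ M : ℝ} (hγ0 : 0 < γ) (hγ1 : γ < 1) (bb v : ℝ → ℝ)
    (hbb : Continuous bb) (hM : ∀ y, |bb y| ≤ M) {c d : ℝ} (hcd : c ≤ d)
    (hv : ∀ y ∈ Set.Ioc c d, 0 ≤ v y)
    (hvi : IntervalIntegrable (fun y => v y ^ (-γ)) volume c d) :
    IntegrableOn (fun y => bb y / v y ^ γ) (Set.Ioc c d) volume ∧
      (∫ y in Set.Ioc c d, |bb y / v y ^ γ|) ≤ M * ∫ y in c..d, v y ^ (-γ) := by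
  have hker : IntegrableOn (fun y => v y ^ (-γ)) (Set.Ioc c d) volume := hvi.1
  have hcore : IntegrableOn (fun y => bb y * v y ^ (-γ)) (Set.Ioc c d) volume :=
    hker.bdd_mul hbb.aestronglyMeasurable (c := M)
      (Filter.Eventually.of_forall fun y => by simpa [Real.norm_eq_abs] using hM y)
  have heq : ∀ y ∈ Set.Ioc c d, bb y / v y ^ γ = bb y * v y ^ (-γ) := by
    intro y hy; rw [Real.rpow_neg (hv y hy), div_eq_mul_inv]
  have hint : IntegrableOn (fun y => bb y / v y ^ γ) (Set.Ioc c d) volume := by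
    refine hcore.congr ?_
    filter_upwards [ae_restrict_mem measurableSet_Ioc] with y hy
    exact (heq y hy).symm
  refine ⟨hint, ?_⟩
  have h2 : (∫ y in Set.Ioc c d, |bb y / v y ^ γ|) ≤ ∫ y in Set.Ioc c d, M * v y ^ (-γ) := by
    refine setIntegral_mono_on hint.abs (hker.const_mul M) measurableSet_Ioc (fun y hy => ?_)
    rw [heq y hy, abs_mul, abs_of_nonneg (Real.rpow_nonneg (hv y hy) _)]
    exact mul_le_mul_of_nonneg_right (hM y) (Real.rpow_nonneg (hv y hy) _)
  rw [MeasureTheory.integral_const_mul] at h2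
  rw [intervalIntegral.integral_of_le hcd]
  exact h2

lemma kb3 {γ T : ℝ} (hγ0 : 0 < γ) (hγ1 : γ < 1) {d : ℝ} (hd : 0 ≤ d) (hdT : d ≤ T) :
    (∫ y in (0:ℝ)..d, y ^ (-γ)) ≤ T ^ (1 - γ) / (1 - γ) := by
  rw [kval hγ1 hd]
  have := Real.rpow_le_rpow hd hdT (by linarith : (0:ℝ) ≤ 1 - γ)
  exact by gcongr <;> linarith

lemma kb1 {γ T : ℝ} (hγ0 : 0 < γ) (hγ1 : γ < 1) {x : ℝ} (hx : 0 ≤ x) (hxT : x ≤ T) :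
    (∫ y in x..T, (y - x) ^ (-γ)) ≤ T ^ (1 - γ) / (1 - γ) := by
  have h := intervalIntegral.integral_comp_sub_right (fun y => y ^ (-γ)) x (a := x) (b := T)
  rw [h]
  simpa using kb3 hγ0 hγ1 (by linarith : (0:ℝ) ≤ T - x) (by linarith)

lemma kb2 {γ T : ℝ} (hγ0 : 0 < γ) (hγ1 : γ < 1) {x : ℝ} (hx : 0 ≤ x) (hxT : x ≤ T) :
    (∫ y in (0:ℝ)..x, (x - y) ^ (-γ)) ≤ T ^ (1 - γ) / (1 - γ) := by
  have h := intervalIntegral.integral_comp_sub_left (fun y => y ^ (-γ)) x (a := (0:ℝ)) (b := x)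
  rw [h]
  simpa using kb3 hγ0 hγ1 hx hxT

lemma plumb_int {T : ℝ} {S : Set ℝ} (hS : MeasurableSet S) (core : ℝ → ℝ) {R : Set ℝ}
    (hR : S ∩ Set.Ioc 0 T = R) (hint : IntegrableOn core R volume) :
    IntegrableOn (S.indicator core) (Set.Ioc 0 T) volume := by
  rw [IntegrableOn, integrable_indicator_iff hS, IntegrableOn,
    Measure.restrict_restrict hS, hR]
  exact hint

lemma plumb_bound {T : ℝ} {S : Set ℝ} (hS : MeasurableSet S) (core : ℝ → ℝ) {R : Set ℝ}
    (hR : S ∩ Set.Ioc 0 T = R) :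
    (∫ y in Set.Ioc (0:ℝ) T, |S.indicator core y|) = ∫ y in R, |core y| := by
  have h : ∀ y, |S.indicator core y| = S.indicator (fun y => |core y|) y := by
    intro y; by_cases h : y ∈ S <;> simp [Set.indicator_apply, h]
  simp only [h]
  rw [MeasureTheory.integral_indicator hS, Measure.restrict_restrict hS, hR]

lemma int1 {γ T : ℝ} (hγ0 : 0 < γ) (hγ1 : γ < 1) (hT : 0 < T)
    (a b : ℝ → ℝ) (ham : Measurable a) (hai : IntegrableOn a (Set.Ioc 0 T) volume)
    (hb : Continuous b) (M : ℝ) (hM : ∀ x, |b x| ≤ M) :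
    Integrable (fun p : ℝ × ℝ => a p.1 * (if p.1 < p.2 then b p.2 / (p.2 - p.1) ^ γ else 0))
      ((volume.restrict (Set.Ioc (0:ℝ) T)).prod (volume.restrict (Set.Ioc (0:ℝ) T))) := by
  have hM0 : 0 ≤ M := le_trans (abs_nonneg _) (hM 0)
  have hind : ∀ (x y : ℝ), (if x < y then b y / (y - x) ^ γ else 0) =
      (Set.Ioi x).indicator (fun y => b y / (y - x) ^ γ) y := fun x y => by
    by_cases h : x < y <;> simp [Set.indicator_apply, h]
  have hR : ∀ x ∈ Set.Ioc (0:ℝ) T, Set.Ioi x ∩ Set.Ioc 0 T = Set.Ioc x T := by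
    intro x hx
    ext s; simp only [Set.mem_inter_iff, Set.mem_Ioi, Set.mem_Ioc]
    exact ⟨fun h => ⟨h.1, h.2.2⟩, fun h => ⟨h.1, lt_trans hx.1 h.1, h.2⟩⟩
  have hsec : ∀ x ∈ Set.Ioc (0:ℝ) T,
      IntegrableOn (fun y => b y / ((fun y => y - x) y) ^ γ) (Set.Ioc x T) volume ∧
      (∫ y in Set.Ioc x T, |b y / ((fun y => y - x) y) ^ γ|) ≤
        M * ∫ y in x..T, ((fun y => y - x) y) ^ (-γ) := fun x hx =>
    sec hγ0 hγ1 b (fun y => y - x) hb hM hx.2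
      (fun y hy => by simp only [Set.mem_Ioc] at hy; show (0:ℝ) ≤ y - x; linarith [hy.1])
      (ker_intble hγ1 x x T)
  refine master a (fun x y => if x < y then b y / (y - x) ^ γ else 0) (M * (T ^ (1-γ) / (1-γ)))
    ham hai ?_ ?_ ?_
  · exact Measurable.ite (measurableSet_lt measurable_fst measurable_snd)
      ((hb.measurable.comp measurable_snd).div ((measurable_snd.sub measurable_fst).pow_const γ))
      measurable_const
  · intro x hx
    show IntegrableOn (fun y => if x < y then b y / (y - x) ^ γ else 0) (Set.Ioc 0 T) volume
    simp only [hind]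
    exact plumb_int measurableSet_Ioi _ (hR x hx) (hsec x hx).1
  · intro x hx
    show (∫ y in Set.Ioc (0:ℝ) T, |if x < y then b y / (y - x) ^ γ else 0|) ≤ _
    simp only [hind]
    rw [plumb_bound measurableSet_Ioi _ (hR x hx)]
    exact (hsec x hx).2.trans (mul_le_mul_of_nonneg_left (kb1 hγ0 hγ1 hx.1.le hx.2) hM0)

lemma int2 {γ T : ℝ} (hγ0 : 0 < γ) (hγ1 : γ < 1) (hT : 0 < T)
    (a b : ℝ → ℝ) (ham : Measurable a) (hai : IntegrableOn a (Set.Ioc 0 T) volume)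
    (hb : Continuous b) (M : ℝ) (hM : ∀ x, |b x| ≤ M) :
    Integrable (fun p : ℝ × ℝ => a p.1 * (if p.2 < p.1 then b p.2 / (p.1 - p.2) ^ γ else 0))
      ((volume.restrict (Set.Ioc (0:ℝ) T)).prod (volume.restrict (Set.Ioc (0:ℝ) T))) := by
  have hM0 : 0 ≤ M := le_trans (abs_nonneg _) (hM 0)
  have hind : ∀ (x y : ℝ), (if y < x then b y / (x - y) ^ γ else 0) =
      (Set.Iio x).indicator (fun y => b y / (x - y) ^ γ) y := fun x y => by
    by_cases h : y < x <;> simp [Set.indicator_apply, h]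
  have hR : ∀ x ∈ Set.Ioc (0:ℝ) T, Set.Iio x ∩ Set.Ioc 0 T = Set.Ioo 0 x := by
    intro x hx
    ext s; simp only [Set.mem_inter_iff, Set.mem_Iio, Set.mem_Ioc, Set.mem_Ioo]
    exact ⟨fun h => ⟨h.2.1, h.1⟩, fun h => ⟨h.2, h.1, le_trans h.2.le hx.2⟩⟩
  have hsec : ∀ x ∈ Set.Ioc (0:ℝ) T,
      IntegrableOn (fun y => b y / ((fun y => x - y) y) ^ γ) (Set.Ioc 0 x) volume ∧
      (∫ y in Set.Ioc 0 x, |b y / ((fun y => x - y) y) ^ γ|) ≤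
        M * ∫ y in (0:ℝ)..x, ((fun y => x - y) y) ^ (-γ) := fun x hx =>
    sec hγ0 hγ1 b (fun y => x - y) hb hM hx.1.le
      (fun y hy => by simp only [Set.mem_Ioc] at hy; show (0:ℝ) ≤ x - y; linarith [hy.2])
      (ker_intble' hγ1 x 0 x)
  refine master a (fun x y => if y < x then b y / (x - y) ^ γ else 0) (M * (T ^ (1-γ) / (1-γ)))
    ham hai ?_ ?_ ?_
  · exact Measurable.ite (measurableSet_lt measurable_snd measurable_fst)
      ((hb.measurable.comp measurable_snd).div ((measurable_fst.sub measurable_snd).pow_const γ))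
      measurable_const
  · intro x hx
    show IntegrableOn (fun y => if y < x then b y / (x - y) ^ γ else 0) (Set.Ioc 0 T) volume
    simp only [hind]
    exact plumb_int measurableSet_Iio _ (hR x hx)
      ((hsec x hx).1.mono_set Set.Ioo_subset_Ioc_self)
  · intro x hx
    show (∫ y in Set.Ioc (0:ℝ) T, |if y < x then b y / (x - y) ^ γ else 0|) ≤ _
    simp only [hind]
    rw [plumb_bound measurableSet_Iio _ (hR x hx), ← MeasureTheory.integral_Ioc_eq_integral_Ioo]
    exact (hsec x hx).2.trans (mul_le_mul_of_nonneg_left (kb2 hγ0 hγ1 hx.1.le hx.2) hM0)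

lemma int3 {γ T : ℝ} (hγ0 : 0 < γ) (hγ1 : γ < 1) (hT : 0 < T)
    (a b : ℝ → ℝ) (ham : Measurable a) (hai : IntegrableOn a (Set.Ioc 0 T) volume)
    (hb : Continuous b) (M : ℝ) (hM : ∀ x, |b x| ≤ M) :
    Integrable (fun p : ℝ × ℝ => a p.1 * (if p.1 + p.2 ≤ T then b (p.1 + p.2) / p.2 ^ γ else 0))
      ((volume.restrict (Set.Ioc (0:ℝ) T)).prod (volume.restrict (Set.Ioc (0:ℝ) T))) := by
  have hM0 : 0 ≤ M := le_trans (abs_nonneg _) (hM 0)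
  have hind : ∀ (x y : ℝ), (if x + y ≤ T then b (x + y) / y ^ γ else 0) =
      (Set.Iic (T - x)).indicator (fun y => b (x + y) / y ^ γ) y := fun x y => by
    rw [Set.indicator_apply]
    by_cases h : x + y ≤ T
    · rw [if_pos h, if_pos (by simp only [Set.mem_Iic]; linarith)]
    · rw [if_neg h, if_neg (by simp only [Set.mem_Iic, not_le]; push_neg at h; linarith)]
  have hR : ∀ x ∈ Set.Ioc (0:ℝ) T, Set.Iic (T - x) ∩ Set.Ioc 0 T = Set.Ioc 0 (T - x) := by
    intro x hx
    ext u; simp only [Set.mem_inter_iff, Set.mem_Iic, Set.mem_Ioc]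
    constructor
    · rintro ⟨h1, h2, _⟩; exact ⟨h2, h1⟩
    · rintro ⟨h1, h2⟩; exact ⟨h2, h1, by linarith [hx.1]⟩
  have hsec : ∀ x ∈ Set.Ioc (0:ℝ) T,
      IntegrableOn (fun y => b (x + y) / ((fun y => y) y) ^ γ) (Set.Ioc 0 (T - x)) volume ∧
      (∫ y in Set.Ioc 0 (T - x), |b (x + y) / ((fun y => y) y) ^ γ|) ≤
        M * ∫ y in (0:ℝ)..(T - x), ((fun y => y) y) ^ (-γ) := fun x hx =>
    sec hγ0 hγ1 (fun y => b (x + y)) (fun y => y)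
      (hb.comp (continuous_const.add continuous_id)) (fun y => hM (x + y))
      (by linarith [hx.2]) (fun y hy => (Set.mem_Ioc.mp hy).1.le)
      (intervalIntegrable_rpow' (by linarith))
  refine master a (fun x y => if x + y ≤ T then b (x + y) / y ^ γ else 0)
    (M * (T ^ (1-γ) / (1-γ))) ham hai ?_ ?_ ?_
  · exact Measurable.ite (measurableSet_le (measurable_fst.add measurable_snd) measurable_const)
      ((hb.measurable.comp (measurable_fst.add measurable_snd)).div
        (measurable_snd.pow_const γ)) measurable_const
  · intro x hx
    show IntegrableOn (fun y => if x + y ≤ T then b (x + y) / y ^ γ else 0) (Set.Ioc 0 T) volume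
    simp only [hind]
    exact plumb_int measurableSet_Iic _ (hR x hx) (hsec x hx).1
  · intro x hx
    show (∫ y in Set.Ioc (0:ℝ) T, |if x + y ≤ T then b (x + y) / y ^ γ else 0|) ≤ _
    simp only [hind]
    rw [plumb_bound measurableSet_Iic _ (hR x hx)]
    exact (hsec x hx).2.trans (mul_le_mul_of_nonneg_left
      (kb3 hγ0 hγ1 (by linarith [hx.2]) (by linarith [hx.1])) hM0)

lemma int4 {γ T : ℝ} (hγ0 : 0 < γ) (hγ1 : γ < 1) (hT : 0 < T)
    (a b : ℝ → ℝ) (ham : Measurable a) (hai : IntegrableOn a (Set.Ioc 0 T) volume)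
    (hb : Continuous b) (M : ℝ) (hM : ∀ x, |b x| ≤ M) :
    Integrable (fun p : ℝ × ℝ => a p.1 * (if p.2 < p.1 then b (p.1 - p.2) / p.2 ^ γ else 0))
      ((volume.restrict (Set.Ioc (0:ℝ) T)).prod (volume.restrict (Set.Ioc (0:ℝ) T))) := by
  have hM0 : 0 ≤ M := le_trans (abs_nonneg _) (hM 0)
  have hind : ∀ (x y : ℝ), (if y < x then b (x - y) / y ^ γ else 0) =
      (Set.Iio x).indicator (fun y => b (x - y) / y ^ γ) y := fun x y => by
    by_cases h : y < x <;> simp [Set.indicator_apply, h]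
  have hR : ∀ x ∈ Set.Ioc (0:ℝ) T, Set.Iio x ∩ Set.Ioc 0 T = Set.Ioo 0 x := by
    intro x hx
    ext s; simp only [Set.mem_inter_iff, Set.mem_Iio, Set.mem_Ioc, Set.mem_Ioo]
    exact ⟨fun h => ⟨h.2.1, h.1⟩, fun h => ⟨h.2, h.1, le_trans h.2.le hx.2⟩⟩
  have hsec : ∀ x ∈ Set.Ioc (0:ℝ) T,
      IntegrableOn (fun y => b (x - y) / ((fun y => y) y) ^ γ) (Set.Ioc 0 x) volume ∧
      (∫ y in Set.Ioc 0 x, |b (x - y) / ((fun y => y) y) ^ γ|) ≤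
        M * ∫ y in (0:ℝ)..x, ((fun y => y) y) ^ (-γ) := fun x hx =>
    sec hγ0 hγ1 (fun y => b (x - y)) (fun y => y)
      (hb.comp (continuous_const.sub continuous_id)) (fun y => hM (x - y))
      hx.1.le (fun y hy => (Set.mem_Ioc.mp hy).1.le)
      (intervalIntegrable_rpow' (by linarith))
  refine master a (fun x y => if y < x then b (x - y) / y ^ γ else 0)
    (M * (T ^ (1-γ) / (1-γ))) ham hai ?_ ?_ ?_
  · exact Measurable.ite (measurableSet_lt measurable_snd measurable_fst)
      ((hb.measurable.comp (measurable_fst.sub measurable_snd)).div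
        (measurable_snd.pow_const γ)) measurable_const
  · intro x hx
    show IntegrableOn (fun y => if y < x then b (x - y) / y ^ γ else 0) (Set.Ioc 0 T) volume
    simp only [hind]
    exact plumb_int measurableSet_Iio _ (hR x hx)
      ((hsec x hx).1.mono_set Set.Ioo_subset_Ioc_self)
  · intro x hx
    show (∫ y in Set.Ioc (0:ℝ) T, |if y < x then b (x - y) / y ^ γ else 0|) ≤ _
    simp only [hind]
    rw [plumb_bound measurableSet_Iio _ (hR x hx), ← MeasureTheory.integral_Ioc_eq_integral_Ioo]
    exact (hsec x hx).2.trans (mul_le_mul_of_nonneg_left (kb3 hγ0 hγ1 hx.1.le hx.2) hM0)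

end FIBPHelpers
theorem fractional_integration_by_parts (γ T : ℝ) (hγ : γ ∈ Set.Ioo (0:ℝ) 1)
    (hT : 0 < T) (f g : ℝ → ℝ)
    (hf : ContinuousOn f (Set.Icc 0 T)) (hg : ContinuousOn g (Set.Icc 0 T))
    (hfd : ∀ t ∈ Set.Ioo (0:ℝ) T, DifferentiableAt ℝ f t)
    (hgd : ∀ t ∈ Set.Ioo (0:ℝ) T, DifferentiableAt ℝ g t)
    (hfi : IntervalIntegrable (deriv f) volume 0 T)
    (hgi : IntervalIntegrable (deriv g) volume 0 T)
    (hfL2 : MeasureTheory.MemLp (leftCaputo γ f) 2 (volume.restrict (Set.Ioc 0 T)))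
    (hgL2 : MeasureTheory.MemLp (rightCaputo γ T g) 2 (volume.restrict (Set.Ioc 0 T))) :
    ∫ t in (0:ℝ)..T, leftCaputo γ f t * g t =
      (∫ t in (0:ℝ)..T, f t * rightCaputo γ T g t) +
        g T * leftRL γ f T - f 0 * rightRL γ T g 0 := by
  obtain ⟨hγ0, hγ1⟩ := hγ
  obtain ⟨c, hc⟩ : ∃ c : ℝ, c = 1 / Real.Gamma (1 - γ) := ⟨_, rfl⟩
  -- clamped versions of f and g
  have hprojc : Continuous (fun x : ℝ => min (max x 0) T) :=
    (continuous_id.max continuous_const).min continuous_const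
  have hproj_mem : ∀ x : ℝ, min (max x 0) T ∈ Set.Icc (0:ℝ) T :=
    fun x => ⟨le_min (le_max_right _ _) hT.le, min_le_right _ _⟩
  have hproj_id : ∀ x ∈ Set.Icc (0:ℝ) T, min (max x 0) T = x := fun x hx => by
    rw [max_eq_left hx.1, min_eq_left hx.2]
  set fc : ℝ → ℝ := fun x => f (min (max x 0) T) with hfc_def
  set gc : ℝ → ℝ := fun x => g (min (max x 0) T) with hgc_def
  have hfcc : Continuous fc := hf.comp_continuous hprojc hproj_mem
  have hgcc : Continuous gc := hg.comp_continuous hprojc hproj_mem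
  have hfc_eq : ∀ x ∈ Set.Icc (0:ℝ) T, fc x = f x := fun x hx => congrArg f (hproj_id x hx)
  have hgc_eq : ∀ x ∈ Set.Icc (0:ℝ) T, gc x = g x := fun x hx => congrArg g (hproj_id x hx)
  obtain ⟨Mf, hMf⟩ : ∃ M : ℝ, ∀ x, |fc x| ≤ M := by
    obtain ⟨M, hM⟩ := isCompact_Icc.exists_bound_of_continuousOn hf
    exact ⟨M, fun x => hM _ (hproj_mem x)⟩
  obtain ⟨Mg, hMg⟩ : ∃ M : ℝ, ∀ x, |gc x| ≤ M := by
    obtain ⟨M, hM⟩ := isCompact_Icc.exists_bound_of_continuousOn hg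
    exact ⟨M, fun x => hM _ (hproj_mem x)⟩
  have hfm : Measurable (deriv f) := measurable_deriv f
  have hgm : Measurable (deriv g) := measurable_deriv g
  have hfio : MeasureTheory.IntegrableOn (deriv f) (Set.Ioc 0 T) volume := hfi.1
  have hgio : MeasureTheory.IntegrableOn (deriv g) (Set.Ioc 0 T) volume := hgi.1
  -- the four product integrabilities
  have hintA : MeasureTheory.Integrable (fun p : ℝ × ℝ =>
      if p.2 < p.1 then c * deriv f p.2 * gc p.1 / (p.1 - p.2) ^ γ else 0)
      ((volume.restrict (Set.Ioc (0:ℝ) T)).prod (volume.restrict (Set.Ioc (0:ℝ) T))) := by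
    have h1 := int1 hγ0 hγ1 hT (fun r => c * deriv f r) gc (measurable_const.mul hfm)
      (MeasureTheory.Integrable.const_mul hfio c) hgcc Mg hMg
    have h2 := h1.swap
    have e : (fun p : ℝ × ℝ =>
        if p.2 < p.1 then c * deriv f p.2 * gc p.1 / (p.1 - p.2) ^ γ else 0)
        = (fun p : ℝ × ℝ => (fun r => c * deriv f r) p.1 *
            (if p.1 < p.2 then gc p.2 / (p.2 - p.1) ^ γ else 0)) ∘ Prod.swap := by
      funext p
      simp only [Function.comp_apply, Prod.fst_swap, Prod.snd_swap]
      by_cases h : p.2 < p.1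
      · rw [if_pos h, if_pos h]; ring
      · rw [if_neg h, if_neg h, mul_zero]
    rw [e]; exact h2
  have hintB : MeasureTheory.Integrable (fun p : ℝ × ℝ =>
      if p.2 < p.1 then c * fc p.2 * deriv g p.1 / (p.1 - p.2) ^ γ else 0)
      ((volume.restrict (Set.Ioc (0:ℝ) T)).prod (volume.restrict (Set.Ioc (0:ℝ) T))) := by
    have h1 := int2 hγ0 hγ1 hT (fun s => c * deriv g s) fc (measurable_const.mul hgm)
      (MeasureTheory.Integrable.const_mul hgio c) hfcc Mf hMf
    have e : (fun p : ℝ × ℝ =>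
        if p.2 < p.1 then c * fc p.2 * deriv g p.1 / (p.1 - p.2) ^ γ else 0)
        = fun p : ℝ × ℝ => (fun s => c * deriv g s) p.1 *
            (if p.2 < p.1 then fc p.2 / (p.1 - p.2) ^ γ else 0) := by
      funext p
      by_cases h : p.2 < p.1
      · rw [if_pos h, if_pos h]; ring
      · rw [if_neg h, if_neg h, mul_zero]
    rw [e]; exact h1
  have hintD : MeasureTheory.Integrable (fun p : ℝ × ℝ =>
      if p.1 + p.2 ≤ T then c * deriv f p.1 * gc (p.1 + p.2) / p.2 ^ γ else 0)
      ((volume.restrict (Set.Ioc (0:ℝ) T)).prod (volume.restrict (Set.Ioc (0:ℝ) T))) := by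
    have h1 := int3 hγ0 hγ1 hT (fun r => c * deriv f r) gc (measurable_const.mul hfm)
      (MeasureTheory.Integrable.const_mul hfio c) hgcc Mg hMg
    have e : (fun p : ℝ × ℝ =>
        if p.1 + p.2 ≤ T then c * deriv f p.1 * gc (p.1 + p.2) / p.2 ^ γ else 0)
        = fun p : ℝ × ℝ => (fun r => c * deriv f r) p.1 *
            (if p.1 + p.2 ≤ T then gc (p.1 + p.2) / p.2 ^ γ else 0) := by
      funext p
      by_cases h : p.1 + p.2 ≤ T
      · rw [if_pos h, if_pos h]; ring
      · rw [if_neg h, if_neg h, mul_zero]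
    rw [e]; exact h1
  have hintC : MeasureTheory.Integrable (fun p : ℝ × ℝ =>
      if p.2 < p.1 then c * deriv g p.1 * fc (p.1 - p.2) / p.2 ^ γ else 0)
      ((volume.restrict (Set.Ioc (0:ℝ) T)).prod (volume.restrict (Set.Ioc (0:ℝ) T))) := by
    have h1 := int4 hγ0 hγ1 hT (fun s => c * deriv g s) fc (measurable_const.mul hgm)
      (MeasureTheory.Integrable.const_mul hgio c) hfcc Mf hMf
    have e : (fun p : ℝ × ℝ =>
        if p.2 < p.1 then c * deriv g p.1 * fc (p.1 - p.2) / p.2 ^ γ else 0)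
        = fun p : ℝ × ℝ => (fun s => c * deriv g s) p.1 *
            (if p.2 < p.1 then fc (p.1 - p.2) / p.2 ^ γ else 0) := by
      funext p
      by_cases h : p.2 < p.1
      · rw [if_pos h, if_pos h]; ring
      · rw [if_neg h, if_neg h, mul_zero]
    rw [e]; exact h1
  -- Step A
  have stepA : (∫ t in (0:ℝ)..T, leftCaputo γ f t * g t)
      = ∫ r in Set.Ioc (0:ℝ) T, ∫ s in Set.Ioc r T, c * deriv f r * gc s / (s - r) ^ γ := by
    rw [intervalIntegral.integral_of_le hT.le]
    have h0 : (∫ t in Set.Ioc (0:ℝ) T, leftCaputo γ f t * g t)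
        = ∫ s in Set.Ioc (0:ℝ) T, ∫ r in Set.Ioc (0:ℝ) s,
            c * deriv f r * gc s / (s - r) ^ γ := by
      refine MeasureTheory.setIntegral_congr_fun measurableSet_Ioc (fun t ht => ?_)
      have hgt : gc t = g t := hgc_eq t ⟨ht.1.le, ht.2⟩
      calc leftCaputo γ f t * g t
          = (c * ∫ r in (0:ℝ)..t, deriv f r / (t - r) ^ γ) * g t := by
            unfold leftCaputo; rw [hc]
        _ = (∫ r in Set.Ioc (0:ℝ) t, deriv f r / (t - r) ^ γ) * (c * g t) := by
            rw [intervalIntegral.integral_of_le ht.1.le]; ring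
        _ = ∫ r in Set.Ioc (0:ℝ) t, (deriv f r / (t - r) ^ γ) * (c * g t) :=
            (MeasureTheory.integral_mul_const _ _).symm
        _ = ∫ r in Set.Ioc (0:ℝ) t, c * deriv f r * gc t / (t - r) ^ γ :=
            MeasureTheory.setIntegral_congr_fun measurableSet_Ioc
              (fun r _ => by rw [hgt]; ring)
    rw [h0]
    exact swap_tri _ hintA
  -- Step B
  have stepB : (∫ t in (0:ℝ)..T, f t * rightCaputo γ T g t)
      = - ∫ s in Set.Ioc (0:ℝ) T, ∫ r in Set.Ioc (0:ℝ) s,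
          c * fc r * deriv g s / (s - r) ^ γ := by
    rw [intervalIntegral.integral_of_le hT.le]
    have h0 : (∫ t in Set.Ioc (0:ℝ) T, f t * rightCaputo γ T g t)
        = ∫ t in Set.Ioc (0:ℝ) T,
            -(∫ s in Set.Ioc t T, c * fc t * deriv g s / (s - t) ^ γ) := by
      refine MeasureTheory.setIntegral_congr_fun measurableSet_Ioc (fun t ht => ?_)
      have hft : fc t = f t := hfc_eq t ⟨ht.1.le, ht.2⟩
      calc f t * rightCaputo γ T g t
          = (∫ s in Set.Ioc t T, deriv g s / (s - t) ^ γ) * (-(c * fc t)) := by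
            unfold rightCaputo
            rw [intervalIntegral.integral_of_le ht.2, hc, hft]; ring
        _ = ∫ s in Set.Ioc t T, (deriv g s / (s - t) ^ γ) * (-(c * fc t)) :=
            (MeasureTheory.integral_mul_const _ _).symm
        _ = ∫ s in Set.Ioc t T, -(c * fc t * deriv g s / (s - t) ^ γ) :=
            MeasureTheory.setIntegral_congr_fun measurableSet_Ioc (fun s _ => by ring)
        _ = -(∫ s in Set.Ioc t T, c * fc t * deriv g s / (s - t) ^ γ) :=
            MeasureTheory.integral_neg _
    rw [h0, MeasureTheory.integral_neg]
    have hswapB : (∫ s in Set.Ioc (0:ℝ) T, ∫ r in Set.Ioc (0:ℝ) s,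
          c * fc r * deriv g s / (s - r) ^ γ)
        = ∫ r in Set.Ioc (0:ℝ) T, ∫ s in Set.Ioc r T,
          c * fc r * deriv g s / (s - r) ^ γ := swap_tri _ hintB
    rw [hswapB]
  -- substitutions
  have hsubA : ∀ r ∈ Set.Ioc (0:ℝ) T,
      (∫ s in Set.Ioc r T, c * deriv f r * gc s / (s - r) ^ γ)
        = ∫ u in Set.Ioc (0:ℝ) (T - r), c * deriv f r * gc (r + u) / u ^ γ := by
    intro r hr
    rw [← intervalIntegral.integral_of_le hr.2,
      ← intervalIntegral.integral_of_le (by linarith [hr.2] : (0:ℝ) ≤ T - r)]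
    have h := intervalIntegral.integral_comp_add_right (a := (0:ℝ)) (b := T - r)
      (fun s => c * deriv f r * gc s / (s - r) ^ γ) r
    simp only [zero_add, sub_add_cancel] at h
    rw [← h]
    refine intervalIntegral.integral_congr (fun u _ => ?_)
    show c * deriv f r * gc (u + r) / (u + r - r) ^ γ = c * deriv f r * gc (r + u) / u ^ γ
    rw [add_sub_cancel_right, add_comm u r]
  have hsubL : ∀ s ∈ Set.Ioc (0:ℝ) T,
      (∫ r in Set.Ioc (0:ℝ) s, c * fc r * deriv g s / (s - r) ^ γ)
        = ∫ u in Set.Ioc (0:ℝ) s, c * deriv g s * fc (s - u) / u ^ γ := by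
    intro s hs
    rw [← intervalIntegral.integral_of_le hs.1.le, ← intervalIntegral.integral_of_le hs.1.le]
    have h := intervalIntegral.integral_comp_sub_left (a := (0:ℝ)) (b := s)
      (fun r => c * fc r * deriv g s / (s - r) ^ γ) s
    simp only [sub_self, sub_zero] at h
    rw [← h]
    refine intervalIntegral.integral_congr (fun u _ => ?_)
    show c * fc (s - u) * deriv g s / (s - (s - u)) ^ γ = c * deriv g s * fc (s - u) / u ^ γ
    rw [sub_sub_cancel]; ring
  have hsubB : ∀ u ∈ Set.Ioc (0:ℝ) T,
      (∫ s in Set.Ioc u T, c * deriv g s * fc (s - u) / u ^ γ)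
        = ∫ r in Set.Ioc (0:ℝ) (T - u), c * deriv g (r + u) * fc r / u ^ γ := by
    intro u hu
    rw [← intervalIntegral.integral_of_le hu.2,
      ← intervalIntegral.integral_of_le (by linarith [hu.2] : (0:ℝ) ≤ T - u)]
    have h := intervalIntegral.integral_comp_add_right (a := (0:ℝ)) (b := T - u)
      (fun s => c * deriv g s * fc (s - u) / u ^ γ) u
    simp only [zero_add, sub_add_cancel] at h
    rw [← h]
    refine intervalIntegral.integral_congr (fun r _ => ?_)
    show c * deriv g (r + u) * fc (r + u - u) / u ^ γ = c * deriv g (r + u) * fc r / u ^ γ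
    rw [add_sub_cancel_right]
  -- marginal integrabilities
  have hI1 : MeasureTheory.Integrable
      (fun u => ∫ r in Set.Ioc (0:ℝ) (T - u), c * deriv f r * gc (r + u) / u ^ γ)
      (volume.restrict (Set.Ioc (0:ℝ) T)) := by
    have h1 := hintD.integral_prod_right
    refine h1.congr ?_
    filter_upwards [MeasureTheory.ae_restrict_mem measurableSet_Ioc] with u hu
    have e : ∀ r : ℝ, (if r + u ≤ T then c * deriv f r * gc (r + u) / u ^ γ else 0)
        = (if u + r ≤ T then (fun x y => c * deriv f y * gc (y + x) / x ^ γ) u r else 0) := by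
      intro r; rw [add_comm u r]
    have h2 := fibp_inner2 (fun x y => c * deriv f y * gc (y + x) / x ^ γ) hu
    calc (∫ r in Set.Ioc (0:ℝ) T, if r + u ≤ T then c * deriv f r * gc (r + u) / u ^ γ else 0)
        = ∫ r in Set.Ioc (0:ℝ) T,
            if u + r ≤ T then c * deriv f r * gc (r + u) / u ^ γ else 0 := by
          simp only [e]
      _ = ∫ r in Set.Ioc (0:ℝ) (T - u), c * deriv f r * gc (r + u) / u ^ γ := h2
  have hI2 : MeasureTheory.Integrable
      (fun u => ∫ s in Set.Ioc u T, c * deriv g s * fc (s - u) / u ^ γ)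
      (volume.restrict (Set.Ioc (0:ℝ) T)) := by
    have h1 := hintC.integral_prod_right
    refine h1.congr ?_
    filter_upwards [MeasureTheory.ae_restrict_mem measurableSet_Ioc] with u hu
    exact fibp_inner1R (fun s u => c * deriv g s * fc (s - u) / u ^ γ) hu
  -- interval integrabilities for FTC
  have hX : ∀ u ∈ Set.Ioc (0:ℝ) T,
      IntervalIntegrable (fun r => deriv f r * gc (r + u)) volume 0 (T - u) := by
    intro u hu
    refine (hfi.mono_set ?_).mul_continuousOn
      ((hgcc.comp (continuous_id.add continuous_const)).continuousOn)
    rw [Set.uIcc_of_le (by linarith [hu.2] : (0:ℝ) ≤ T - u), Set.uIcc_of_le hT.le]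
    exact Set.Icc_subset_Icc le_rfl (by linarith [hu.1])
  have hY : ∀ u ∈ Set.Ioc (0:ℝ) T,
      IntervalIntegrable (fun r => fc r * deriv g (r + u)) volume 0 (T - u) := by
    intro u hu
    have h1 : IntervalIntegrable (deriv g) volume u T := by
      refine hgi.mono_set ?_
      rw [Set.uIcc_of_le hu.2, Set.uIcc_of_le hT.le]
      exact Set.Icc_subset_Icc hu.1.le le_rfl
    have h2 := h1.comp_add_right u
    simp only [sub_self] at h2
    exact h2.continuousOn_mul hfcc.continuousOn
  -- FTC
  have hFTC : ∀ u ∈ Set.Ioc (0:ℝ) T,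
      (∫ r in (0:ℝ)..(T - u), (deriv f r * gc (r + u) + fc r * deriv g (r + u)))
        = fc (T - u) * gc T - fc 0 * gc u := by
    intro u hu
    have hTu : (0:ℝ) ≤ T - u := by linarith [hu.2]
    have hder : ∀ r ∈ Set.Ioo (0:ℝ) (T - u),
        HasDerivAt (fun r => fc r * gc (r + u))
          (deriv f r * gc (r + u) + fc r * deriv g (r + u)) r := by
      intro r hr
      have hrT : r ∈ Set.Ioo (0:ℝ) T := ⟨hr.1, by linarith [hr.2, hu.1]⟩
      have hruT : r + u ∈ Set.Ioo (0:ℝ) T := ⟨by linarith [hr.1, hu.1], by linarith [hr.2]⟩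
      have hfc' : HasDerivAt fc (deriv f r) r := by
        refine ((hfd r hrT).hasDerivAt).congr_of_eventuallyEq ?_
        exact Filter.eventuallyEq_of_mem (isOpen_Ioo.mem_nhds hrT)
          (fun x hx => hfc_eq x (Set.Ioo_subset_Icc_self hx))
      have hg1 : HasDerivAt gc (deriv g (r + u)) (r + u) := by
        refine ((hgd _ hruT).hasDerivAt).congr_of_eventuallyEq ?_
        exact Filter.eventuallyEq_of_mem (isOpen_Ioo.mem_nhds hruT)
          (fun x hx => hgc_eq x (Set.Ioo_subset_Icc_self hx))
      have hg2 : HasDerivAt (fun x => gc (x + u)) (deriv g (r + u)) r := by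
        have h3 := HasDerivAt.comp r hg1 ((hasDerivAt_id r).add_const u)
        simpa [Function.comp_def] using h3
      exact hfc'.mul hg2
    have h4 := intervalIntegral.integral_eq_sub_of_hasDerivAt_of_le hTu
      ((hfcc.mul (hgcc.comp (continuous_id.add continuous_const))).continuousOn)
      hder ((hX u hu).add (hY u hu))
    rw [h4]
    show fc (T - u) * gc (T - u + u) - fc 0 * gc (0 + u) = fc (T - u) * gc T - fc 0 * gc u
    rw [sub_add_cancel, zero_add]
  -- per-u inner sum
  have hinner : ∀ u ∈ Set.Ioc (0:ℝ) T,
      ((∫ r in Set.Ioc (0:ℝ) (T - u), c * deriv f r * gc (r + u) / u ^ γ)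
        + (∫ s in Set.Ioc u T, c * deriv g s * fc (s - u) / u ^ γ))
      = (gc T * (c * fc (T - u))) / u ^ γ - (fc 0 * (c * gc u)) / u ^ γ := by
    intro u hu
    have hTu : (0:ℝ) ≤ T - u := by linarith [hu.2]
    rw [hsubB u hu]
    have e1 : ∀ r : ℝ, c * deriv f r * gc (r + u) / u ^ γ
        = (c / u ^ γ) * (deriv f r * gc (r + u)) := fun r => by ring
    have e2 : ∀ r : ℝ, c * deriv g (r + u) * fc r / u ^ γ
        = (c / u ^ γ) * (fc r * deriv g (r + u)) := fun r => by ring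
    simp only [e1, e2]
    rw [MeasureTheory.integral_const_mul, MeasureTheory.integral_const_mul, ← mul_add,
      ← intervalIntegral.integral_of_le hTu, ← intervalIntegral.integral_of_le hTu,
      ← intervalIntegral.integral_add (hX u hu) (hY u hu), hFTC u hu]
    ring
  -- 1-d integrabilities for the final split
  have hq1 : MeasureTheory.IntegrableOn
      (fun u => (gc T * (c * fc (T - u))) / u ^ γ) (Set.Ioc (0:ℝ) T) volume := by
    refine (sec hγ0 hγ1 (fun u => gc T * (c * fc (T - u))) (fun u => u)
      (continuous_const.mul (continuous_const.mul
        (hfcc.comp (continuous_const.sub continuous_id))))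
      (M := |gc T| * (|c| * Mf)) ?_ hT.le
      (fun y hy => (Set.mem_Ioc.mp hy).1.le) (intervalIntegrable_rpow' (by linarith))).1
    intro x
    rw [abs_mul, abs_mul]
    exact mul_le_mul_of_nonneg_left
      (mul_le_mul_of_nonneg_left (hMf _) (abs_nonneg c)) (abs_nonneg _)
  have hq2 : MeasureTheory.IntegrableOn
      (fun u => (fc 0 * (c * gc u)) / u ^ γ) (Set.Ioc (0:ℝ) T) volume := by
    refine (sec hγ0 hγ1 (fun u => fc 0 * (c * gc u)) (fun u => u)
      (continuous_const.mul (continuous_const.mul hgcc))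
      (M := |fc 0| * (|c| * Mg)) ?_ hT.le
      (fun y hy => (Set.mem_Ioc.mp hy).1.le) (intervalIntegrable_rpow' (by linarith))).1
    intro x
    rw [abs_mul, abs_mul]
    exact mul_le_mul_of_nonneg_left
      (mul_le_mul_of_nonneg_left (hMg _) (abs_nonneg c)) (abs_nonneg _)
  -- flip identity
  have hflip : (∫ u in Set.Ioc (0:ℝ) T, fc (T - u) / u ^ γ)
      = ∫ r in Set.Ioc (0:ℝ) T, fc r / (T - r) ^ γ := by
    rw [← intervalIntegral.integral_of_le hT.le, ← intervalIntegral.integral_of_le hT.le]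
    have h := intervalIntegral.integral_comp_sub_left (a := (0:ℝ)) (b := T)
      (fun r => fc r / (T - r) ^ γ) T
    simp only [sub_self, sub_zero] at h
    rw [← h]
    refine intervalIntegral.integral_congr (fun u _ => ?_)
    show fc (T - u) / u ^ γ = fc (T - u) / (T - (T - u)) ^ γ
    rw [sub_sub_cancel]
  -- RL identifications
  have hLRL : g T * leftRL γ f T
      = gc T * (c * ∫ r in Set.Ioc (0:ℝ) T, fc r / (T - r) ^ γ) := by
    have h1 : leftRL γ f T = c * ∫ r in (0:ℝ)..T, f r / (T - r) ^ γ := by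
      unfold leftRL; rw [hc]
    have h2 : (∫ r in Set.Ioc (0:ℝ) T, f r / (T - r) ^ γ)
        = ∫ r in Set.Ioc (0:ℝ) T, fc r / (T - r) ^ γ :=
      MeasureTheory.setIntegral_congr_fun measurableSet_Ioc
        (fun r hr => by rw [hfc_eq r ⟨hr.1.le, hr.2⟩])
    rw [h1, intervalIntegral.integral_of_le hT.le, h2, ← hgc_eq T ⟨hT.le, le_refl T⟩]
  have hRRL : f 0 * rightRL γ T g 0
      = fc 0 * (c * ∫ u in Set.Ioc (0:ℝ) T, gc u / u ^ γ) := by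
    have h1 : rightRL γ T g 0 = c * ∫ s in (0:ℝ)..T, g s / (s - 0) ^ γ := by
      unfold rightRL; rw [hc]
    have h2 : (∫ s in (0:ℝ)..T, g s / (s - 0) ^ γ)
        = ∫ u in Set.Ioc (0:ℝ) T, gc u / u ^ γ := by
      rw [intervalIntegral.integral_of_le hT.le]
      refine MeasureTheory.setIntegral_congr_fun measurableSet_Ioc (fun s hs => ?_)
      rw [sub_zero, hgc_eq s ⟨hs.1.le, hs.2⟩]
    rw [h1, h2, ← hfc_eq 0 ⟨le_refl (0:ℝ), hT.le⟩]
  -- Step C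
  have stepC : (∫ r in Set.Ioc (0:ℝ) T, ∫ s in Set.Ioc r T, c * deriv f r * gc s / (s - r) ^ γ)
      + (∫ s in Set.Ioc (0:ℝ) T, ∫ r in Set.Ioc (0:ℝ) s, c * fc r * deriv g s / (s - r) ^ γ)
      = g T * leftRL γ f T - f 0 * rightRL γ T g 0 := by
    have hP1a : (∫ r in Set.Ioc (0:ℝ) T, ∫ s in Set.Ioc r T,
          c * deriv f r * gc s / (s - r) ^ γ)
        = ∫ r in Set.Ioc (0:ℝ) T, ∫ u in Set.Ioc (0:ℝ) (T - r),
          c * deriv f r * gc (r + u) / u ^ γ :=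
      MeasureTheory.setIntegral_congr_fun measurableSet_Ioc hsubA
    have hP1b : (∫ r in Set.Ioc (0:ℝ) T, ∫ u in Set.Ioc (0:ℝ) (T - r),
          c * deriv f r * gc (r + u) / u ^ γ)
        = ∫ u in Set.Ioc (0:ℝ) T, ∫ r in Set.Ioc (0:ℝ) (T - u),
          c * deriv f r * gc (r + u) / u ^ γ := swap_tri2 _ hintD
    have hP2a : (∫ s in Set.Ioc (0:ℝ) T, ∫ r in Set.Ioc (0:ℝ) s,
          c * fc r * deriv g s / (s - r) ^ γ)
        = ∫ s in Set.Ioc (0:ℝ) T, ∫ u in Set.Ioc (0:ℝ) s,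
          c * deriv g s * fc (s - u) / u ^ γ :=
      MeasureTheory.setIntegral_congr_fun measurableSet_Ioc hsubL
    have hP2b : (∫ s in Set.Ioc (0:ℝ) T, ∫ u in Set.Ioc (0:ℝ) s,
          c * deriv g s * fc (s - u) / u ^ γ)
        = ∫ u in Set.Ioc (0:ℝ) T, ∫ s in Set.Ioc u T,
          c * deriv g s * fc (s - u) / u ^ γ := swap_tri _ hintC
    rw [hP1a, hP1b, hP2a, hP2b, ← MeasureTheory.integral_add hI1 hI2]
    have hsum : (∫ u in Set.Ioc (0:ℝ) T,
          ((∫ r in Set.Ioc (0:ℝ) (T - u), c * deriv f r * gc (r + u) / u ^ γ)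
            + ∫ s in Set.Ioc u T, c * deriv g s * fc (s - u) / u ^ γ))
        = ∫ u in Set.Ioc (0:ℝ) T,
            ((gc T * (c * fc (T - u))) / u ^ γ - (fc 0 * (c * gc u)) / u ^ γ) :=
      MeasureTheory.setIntegral_congr_fun measurableSet_Ioc hinner
    rw [hsum, MeasureTheory.integral_sub hq1 hq2]
    have hq1' : (∫ u in Set.Ioc (0:ℝ) T, (gc T * (c * fc (T - u))) / u ^ γ)
        = gc T * (c * ∫ r in Set.Ioc (0:ℝ) T, fc r / (T - r) ^ γ) := by
      have e : ∀ u : ℝ, (gc T * (c * fc (T - u))) / u ^ γ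
          = gc T * (c * (fc (T - u) / u ^ γ)) := fun u => by ring
      simp only [e]
      rw [MeasureTheory.integral_const_mul, MeasureTheory.integral_const_mul, hflip]
    have hq2' : (∫ u in Set.Ioc (0:ℝ) T, (fc 0 * (c * gc u)) / u ^ γ)
        = fc 0 * (c * ∫ u in Set.Ioc (0:ℝ) T, gc u / u ^ γ) := by
      have e : ∀ u : ℝ, (fc 0 * (c * gc u)) / u ^ γ
          = fc 0 * (c * (gc u / u ^ γ)) := fun u => by ring
      simp only [e]
      rw [MeasureTheory.integral_const_mul, MeasureTheory.integral_const_mul]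
    rw [hq1', hq2', hLRL, hRRL]
  rw [stepA, stepB]
  linarith [stepC]
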